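/- Let N and D be self-adjoint operators on a complex Hilbert space, Ψ a unit vector, and Ψ⊥ a unit vector orthogonal to Ψ. Then ⟨Ψ, N²Ψ⟩ + ⟨Ψ, D²Ψ⟩ ≥ ±i⟨Ψ, [N,D]Ψ⟩ + |⟨Ψ, (N ± iD)Ψ⊥⟩|², since the second moments dominate the variances. -/

import Mathlib

open Complex

local notation "⟪" x ", " y "⟫" => @inner ℂ _ _ x y

/-- Second moments dominate variances in the Maccone–Pati sum relation:
⟨Ψ,N²Ψ⟩ + ⟨Ψ,D²Ψ⟩ ≥ ±i⟨Ψ,[N,D]Ψ⟩ + |⟨Ψ,(N ± iD)Ψ⊥⟩|². -/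
theorem second_moment_sum_bound
    {E : Type*} [NormedAddCommGroup E] [InnerProductSpace ℂ E]
    (N D : E →ₗ[ℂ] E)
    (hN : ∀ x y : E, ⟪N x, y⟫ = ⟪x, N y⟫)
    (hD : ∀ x y : E, ⟪D x, y⟫ = ⟪x, D y⟫)
    (Ψ Ψp : E) (hΨ : ‖Ψ‖ = 1) (hΨp : ‖Ψp‖ = 1) (horth : ⟪Ψ, Ψp⟫ = 0)
    (s : ℝ) (hs : s = 1 ∨ s = -1)
    (hsign : 0 ≤ s * (Complex.I * ⟪Ψ, N (D Ψ) - D (N Ψ)⟫).re) :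
    (⟪Ψ, N (N Ψ)⟫).re + (⟪Ψ, D (D Ψ)⟫).re ≥
      s * (Complex.I * ⟪Ψ, N (D Ψ) - D (N Ψ)⟫).re +
        ‖⟪Ψ, N Ψp + ((s : ℂ) * Complex.I) • D Ψp⟫‖ ^ 2 := by
  have hs2 : s ^ 2 = 1 := by rcases hs with h | h <;> simp [h]
  set x := N Ψ with hx
  set y := D Ψ with hy
  set g : E := x - ((s : ℂ) * Complex.I) • y with hg
  -- the inner product with Ψp equals ⟪g, Ψp⟫
  have hinner : ⟪Ψ, N Ψp + ((s : ℂ) * Complex.I) • D Ψp⟫ = ⟪g, Ψp⟫ := by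
    rw [hg, inner_sub_left, inner_smul_left, inner_add_right, inner_smul_right,
      ← hN Ψ Ψp, ← hD Ψ Ψp]
    simp [Complex.conj_I, Complex.conj_ofReal, mul_comm]
    rfl
  -- Cauchy-Schwarz
  have hcs : ‖⟪g, Ψp⟫‖ ≤ ‖g‖ := by
    have := norm_inner_le_norm (𝕜 := ℂ) g Ψp
    simpa [hΨp] using this
  have hg0 : (0:ℝ) ≤ ‖⟪g, Ψp⟫‖ := norm_nonneg _
  have hcs2 : (‖⟪g, Ψp⟫‖) ^ 2 ≤ ‖g‖ ^ 2 := by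
    exact pow_le_pow_left₀ hg0 hcs 2
  -- second moments
  have hNN : (⟪Ψ, N (N Ψ)⟫).re = ‖x‖ ^ 2 := by
    rw [← hN Ψ (N Ψ), ← hx]
    simpa using inner_self_eq_norm_sq (𝕜 := ℂ) (x := x)
  have hDD : (⟪Ψ, D (D Ψ)⟫).re = ‖y‖ ^ 2 := by
    rw [← hD Ψ (D Ψ), ← hy]
    simpa using inner_self_eq_norm_sq (𝕜 := ℂ) (x := y)
  -- commutator
  have hcomm : (Complex.I * ⟪Ψ, N (D Ψ) - D (N Ψ)⟫).re = -2 * (⟪x, y⟫).im := by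
    have hz : (⟪y, x⟫ : ℂ) = (starRingEnd ℂ) ⟪x, y⟫ := (inner_conj_symm y x).symm
    rw [inner_sub_right, ← hN Ψ (D Ψ), ← hD Ψ (N Ψ), ← hx, ← hy]
    rw [hz]
    simp only [Complex.mul_re, Complex.sub_re, Complex.sub_im, Complex.I_re,
      Complex.I_im, Complex.conj_re, Complex.conj_im]
    ring
  -- norm of g
  have hng : ‖g‖ ^ 2 = ‖x‖ ^ 2 + 2 * s * (⟪x, y⟫).im + ‖y‖ ^ 2 := by
    rw [hg, @norm_sub_sq ℂ, inner_smul_right, norm_smul]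
    have habs : ‖(s : ℂ) * Complex.I‖ = 1 := by
      rcases hs with h | h <;> simp [h]
    rw [habs, one_mul]
    have hre : Complex.re (((s : ℂ) * Complex.I) * ⟪x, y⟫) = -s * (⟪x, y⟫).im := by
      simp [Complex.mul_re]
    simp only [RCLike.re_to_complex]
    rw [hre]
    ring
  rw [hNN, hDD, hcomm, hinner]
  nlinarith [hcs2, hng]
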